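/- Let (A,B) satisfy A+B = bcᵀ for b ∈ ℝᵐ, c ∈ ℝⁿ. Then (x*,y*) ∈ S₁×S₂ is a Nash equilibrium if and only if there exist π₁, π₂ ∈ ℝ and ξ ∈ [min_j cⱼ, max_j cⱼ] with Ay* ≤ π₁·1, (x*)ᵀB ≤ π₂·1ᵀ, cᵀy* = ξ, and ((x*)ᵀb)·ξ − π₁ − π₂ = 0. -/

import Mathlib

open Matrix Finset

def IsNash {m n : ℕ} (A B : Matrix (Fin m) (Fin n) ℝ)
    (xb : Fin m → ℝ) (yb : Fin n → ℝ) : Prop :=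
  xb ∈ stdSimplex ℝ (Fin m) ∧ yb ∈ stdSimplex ℝ (Fin n) ∧
  (∀ x ∈ stdSimplex ℝ (Fin m), x ⬝ᵥ A *ᵥ yb ≤ xb ⬝ᵥ A *ᵥ yb) ∧
  (∀ y ∈ stdSimplex ℝ (Fin n), xb ⬝ᵥ B *ᵥ y ≤ xb ⬝ᵥ B *ᵥ yb)

lemma dot_le_of_forall {k : ℕ} {x v : Fin k → ℝ} (hx : x ∈ stdSimplex ℝ (Fin k))
    {π : ℝ} (h : ∀ i, v i ≤ π) : v ⬝ᵥ x ≤ π := by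
  have : v ⬝ᵥ x ≤ ∑ i, π * x i := by
    apply Finset.sum_le_sum
    intro i _
    exact mul_le_mul_of_nonneg_right (h i) (hx.1 i)
  simpa [← Finset.mul_sum, hx.2] using this

lemma le_dot_of_forall {k : ℕ} {x v : Fin k → ℝ} (hx : x ∈ stdSimplex ℝ (Fin k))
    {π : ℝ} (h : ∀ i, π ≤ v i) : π ≤ v ⬝ᵥ x := by
  have : ∑ i, π * x i ≤ v ⬝ᵥ x := by
    apply Finset.sum_le_sum
    intro i _
    exact mul_le_mul_of_nonneg_right (h i) (hx.1 i)
  simpa [← Finset.mul_sum, hx.2] using this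

lemma single_mem_std {k : ℕ} (i : Fin k) : Pi.single i (1:ℝ) ∈ stdSimplex ℝ (Fin k) := by
  constructor
  · intro j
    by_cases h : j = i <;> simp [Pi.single_apply, h]
  · simp

lemma dot_vmv {m n : ℕ} (xs : Fin m → ℝ) (ys : Fin n → ℝ) (b : Fin m → ℝ) (c : Fin n → ℝ) :
    xs ⬝ᵥ (Matrix.vecMulVec b c) *ᵥ ys = (xs ⬝ᵥ b) * (c ⬝ᵥ ys) := by
  simp only [dotProduct, mulVec, vecMulVec_apply, Finset.sum_mul, Finset.mul_sum]
  rw [Finset.sum_comm]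
  apply Finset.sum_congr rfl; intro j _
  apply Finset.sum_congr rfl; intro i _
  ring

theorem stmt17 {m n : ℕ} [NeZero n] (A B : Matrix (Fin m) (Fin n) ℝ)
    (b : Fin m → ℝ) (c : Fin n → ℝ) (hAB : A + B = Matrix.vecMulVec b c)
    (xs : Fin m → ℝ) (ys : Fin n → ℝ)
    (hx : xs ∈ stdSimplex ℝ (Fin m)) (hy : ys ∈ stdSimplex ℝ (Fin n)) :
    IsNash A B xs ys ↔
      ∃ (π₁ π₂ ξ : ℝ),
        ξ ∈ Set.Icc (Finset.univ.inf' Finset.univ_nonempty c)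
          (Finset.univ.sup' Finset.univ_nonempty c) ∧
        (∀ i, A i ⬝ᵥ ys ≤ π₁) ∧ (∀ j, xs ⬝ᵥ Bᵀ j ≤ π₂) ∧
        c ⬝ᵥ ys = ξ ∧ (xs ⬝ᵥ b) * ξ - π₁ - π₂ = 0 := by
  have hsum : xs ⬝ᵥ A *ᵥ ys + xs ⬝ᵥ B *ᵥ ys = (xs ⬝ᵥ b) * (c ⬝ᵥ ys) := by
    rw [← dot_vmv, ← hAB, add_mulVec, dotProduct_add]
  constructor
  · rintro ⟨-, -, hA, hB⟩
    refine ⟨xs ⬝ᵥ A *ᵥ ys, xs ⬝ᵥ B *ᵥ ys, c ⬝ᵥ ys, ⟨?_, ?_⟩, ?_, ?_, rfl, by linarith⟩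
    · exact le_dot_of_forall hy (fun j => Finset.inf'_le c (Finset.mem_univ j))
    · exact dot_le_of_forall hy (fun j => Finset.le_sup' c (Finset.mem_univ j))
    · intro i
      have := hA (Pi.single i 1) (single_mem_std i)
      simpa [single_dotProduct, Matrix.mulVec] using this
    · intro j
      have := hB (Pi.single j 1) (single_mem_std j)
      have h2 : xs ⬝ᵥ B *ᵥ Pi.single j (1:ℝ) = xs ⬝ᵥ Bᵀ j := by
        simp [dotProduct, mulVec, transpose_apply, Pi.single_apply, Finset.mul_sum]
      linarith [this, h2.symm.le]
  · rintro ⟨π₁, π₂, ξ, -, hA, hB, hξ, heq⟩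
    have hrow : ∀ i, (A *ᵥ ys) i ≤ π₁ := fun i => hA i
    have hcol : ∀ j, (Matrix.vecMul xs B) j ≤ π₂ := by
      intro j
      have := hB j
      simpa [vecMul, dotProduct, transpose_apply] using this
    have h1 : xs ⬝ᵥ A *ᵥ ys ≤ π₁ := by
      rw [dotProduct_comm]; exact dot_le_of_forall hx hrow
    have h2 : xs ⬝ᵥ B *ᵥ ys ≤ π₂ := by
      rw [dotProduct_mulVec]
      exact dot_le_of_forall hy hcol
    rw [hξ] at hsum
    have heq1 : xs ⬝ᵥ A *ᵥ ys = π₁ ∧ xs ⬝ᵥ B *ᵥ ys = π₂ := ⟨by linarith, by linarith⟩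
    refine ⟨hx, hy, ?_, ?_⟩
    · intro x hxm
      rw [heq1.1, dotProduct_comm]
      exact dot_le_of_forall hxm hrow
    · intro y hym
      rw [heq1.2, dotProduct_mulVec]
      exact dot_le_of_forall hym hcol
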